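/- For each integer N ≥ 3, let (F^N_t)_{t≥0} be a filtration on a probability space carrying, for each t ≥ 1, ℕ-valued random variables ν^N_t(1),…,ν^N_t(N) with ∑_{i=1}^N ν^N_t(i) = N almost surely, where ν^N_t is F^N_t-measurable. Define c_N(t) and D_N(t) from the vector ν^N_t, and τ_N(t) := inf{s ≥ 1 : ∑_{r=1}^s c_N(r) ≥ t}, assumed almost surely finite for every finite t. Suppose there is a deterministic sequence (b_N) with b_N → 0 such that for all N and all t ≥ 1, almost surely (1/(N(N−1)(N−2))) ∑_{i=1}^N E[(ν^N_t(i))_3 | F^N_{t−1}] ≤ b_N · (1/(N(N−1))) ∑_{i=1}^N E[(ν^N_t(i))_2 | F^N_{t−1}]. Then for all fixed reals 0 ≤ s < t, E[∑_{r=τ_N(s)+1}^{τ_N(t)} D_N(r)] → 0 as N → ∞. -/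

import Mathlib

open MeasureTheory Finset Filter

/-- Pair merger rate `c_N` of a vector of offspring counts. -/
noncomputable def pairRate (N : ℕ) (ν : Fin N → ℕ) : ℝ :=
  (1 / ((N : ℝ) * (N - 1))) * ∑ i, (ν i : ℝ) * ((ν i : ℝ) - 1)

/-- Multiple-merger bound `D_N` of a vector of offspring counts. -/
noncomputable def multiRate (N : ℕ) (ν : Fin N → ℕ) : ℝ :=
  (1 / ((N : ℝ) ^ 2 * (N - 1))) * ∑ i, (ν i : ℝ) * ((ν i : ℝ) - 1) *
    ((ν i : ℝ) + (1 / (N : ℝ)) * ∑ j ∈ Finset.univ.erase i, (ν j : ℝ) ^ 2)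

/-- Generalized inverse `τ(t) = inf {s ≥ 1 : ∑_{r=1}^s c r ≥ t}` of the cumulated
sequence `c`. -/
noncomputable def genInv (c : ℕ → ℝ) (t : ℝ) : ℕ :=
  sInf {s : ℕ | 1 ≤ s ∧ t ≤ ∑ r ∈ Finset.Icc 1 s, c r}

noncomputable def thirdRate (N : ℕ) (ν : Fin N → ℕ) : ℝ :=
  (1 / ((N : ℝ) * ((N : ℝ) - 1) * ((N : ℝ) - 2))) *
    ∑ i, (ν i : ℝ) * ((ν i : ℝ) - 1) * ((ν i : ℝ) - 2)

lemma pair_term_nonneg (n : ℕ) : 0 ≤ (n : ℝ) * ((n : ℝ) - 1) := by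
  rcases n with _ | m
  · simp
  · have h : (1 : ℝ) ≤ ((m + 1 : ℕ) : ℝ) := by exact_mod_cast Nat.one_le_iff_ne_zero.mpr (by simp)
    nlinarith [Nat.cast_nonneg (α := ℝ) (m + 1)]

lemma third_term_nonneg (n : ℕ) : 0 ≤ (n : ℝ) * ((n : ℝ) - 1) * ((n : ℝ) - 2) := by
  match n with
  | 0 => norm_num
  | 1 => norm_num
  | 2 => norm_num
  | (m + 3) =>
    have h : (3 : ℝ) ≤ ((m + 3 : ℕ) : ℝ) := by push_cast; linarith [Nat.cast_nonneg (α := ℝ) m]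
    push_cast at h ⊢
    have h0 : (0:ℝ) ≤ (m:ℝ) + 3 := by linarith
    have h1 : (0:ℝ) ≤ (m:ℝ) + 3 - 1 := by linarith
    have h2 : (0:ℝ) ≤ (m:ℝ) + 3 - 2 := by linarith
    exact mul_nonneg (mul_nonneg h0 h1) h2

lemma pairRate_nonneg (N : ℕ) (ν : Fin N → ℕ) : 0 ≤ pairRate N ν := by
  unfold pairRate
  apply mul_nonneg
  · rcases Nat.eq_zero_or_pos N with h | h
    · subst h; norm_num
    · have h1 : (1 : ℝ) ≤ N := by exact_mod_cast h
      apply div_nonneg zero_le_one; nlinarith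
  · exact Finset.sum_nonneg fun i _ => pair_term_nonneg (ν i)

lemma multiRate_nonneg (N : ℕ) (ν : Fin N → ℕ) : 0 ≤ multiRate N ν := by
  unfold multiRate
  apply mul_nonneg
  · rcases Nat.eq_zero_or_pos N with h | h
    · subst h; norm_num
    · have h1 : (1 : ℝ) ≤ N := by exact_mod_cast h
      apply div_nonneg zero_le_one; nlinarith [sq_nonneg ((N:ℝ))]
  · refine Finset.sum_nonneg fun i _ => mul_nonneg (pair_term_nonneg (ν i)) ?_
    have h1 : (0:ℝ) ≤ (ν i : ℝ) := Nat.cast_nonneg _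
    have h2 : (0:ℝ) ≤ 1 / (N : ℝ) := by positivity
    have h3 : (0:ℝ) ≤ ∑ j ∈ Finset.univ.erase i, ((ν j : ℝ))^2 :=
      Finset.sum_nonneg fun j _ => sq_nonneg _
    positivity

lemma thirdRate_nonneg (N : ℕ) (hN : 3 ≤ N) (ν : Fin N → ℕ) : 0 ≤ thirdRate N ν := by
  unfold thirdRate
  have hn : (3 : ℝ) ≤ (N : ℝ) := by exact_mod_cast hN
  apply mul_nonneg
  · apply div_nonneg zero_le_one
    have h0 : (0:ℝ) ≤ (N:ℝ) := by linarith
    have h1 : (0:ℝ) ≤ (N:ℝ) - 1 := by linarith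
    have h2 : (0:ℝ) ≤ (N:ℝ) - 2 := by linarith
    exact mul_nonneg (mul_nonneg h0 h1) h2
  · exact Finset.sum_nonneg fun i _ => third_term_nonneg (ν i)

/-- swap of a double sum over off-diagonal pairs -/
lemma sum_erase_comm {N : ℕ} (G : Fin N → Fin N → ℝ) :
    ∑ i, ∑ j ∈ Finset.univ.erase i, G i j = ∑ j, ∑ i ∈ Finset.univ.erase j, G i j := by
  have h : ∀ (i : Fin N) (H : Fin N → ℝ),
      ∑ j ∈ Finset.univ.erase i, H j = ∑ j, if j ≠ i then H j else 0 := by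
    intro i H
    rw [← Finset.filter_ne' Finset.univ i, Finset.sum_filter]
  calc ∑ i, ∑ j ∈ Finset.univ.erase i, G i j
      = ∑ i, ∑ j, if j ≠ i then G i j else 0 := by
        exact Finset.sum_congr rfl fun i _ => h i _
    _ = ∑ j, ∑ i, if j ≠ i then G i j else 0 := Finset.sum_comm
    _ = ∑ j, ∑ i, if i ≠ j then G i j else 0 := by
        refine Finset.sum_congr rfl fun j _ => Finset.sum_congr rfl fun i _ => ?_
        simp only [ne_comm]
    _ = ∑ j, ∑ i ∈ Finset.univ.erase j, G i j := by
        exact Finset.sum_congr rfl fun j _ => (h j _).symm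

lemma key_sum (N : ℕ) (hN : 0 < N) (x : Fin N → ℝ) (hx0 : ∀ i, 0 ≤ x i)
    (hT0 : ∀ i, 0 ≤ x i * (x i - 1) * (x i - 2)) (ha0 : ∀ i, 0 ≤ x i * (x i - 1))
    (hsx : ∑ i, x i = (N : ℝ)) :
    ∑ i, x i * (x i - 1) * (x i + (1 / (N : ℝ)) * ∑ j ∈ Finset.univ.erase i, x j ^ 2)
      ≤ 2 * (∑ i, x i * (x i - 1) * (x i - 2)) + 4 * ∑ i, x i * (x i - 1) := by
  set n : ℝ := (N : ℝ) with hn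
  have hn0 : (0 : ℝ) < n := by rw [hn]; exact_mod_cast hN
  set T : ℝ := ∑ i, x i * (x i - 1) * (x i - 2) with hT
  set A : ℝ := ∑ i, x i * (x i - 1) with hA
  have hT0' : 0 ≤ T := Finset.sum_nonneg fun i _ => hT0 i
  have hA0' : 0 ≤ A := Finset.sum_nonneg fun i _ => ha0 i
  have herase_le : ∀ i : Fin N, ∑ j ∈ Finset.univ.erase i, x j ≤ n := by
    intro i
    calc ∑ j ∈ Finset.univ.erase i, x j
        ≤ ∑ j, x j := Finset.sum_le_sum_of_subset_of_nonneg
          (Finset.erase_subset _ _) (fun j _ _ => hx0 j)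
      _ = n := hsx
  -- split the main sum
  have hS : ∑ i, x i * (x i - 1) * (x i + (1 / n) * ∑ j ∈ Finset.univ.erase i, x j ^ 2)
      = (∑ i, x i * (x i - 1) * x i)
        + (1 / n) * ∑ i, (x i * (x i - 1)) * (∑ j ∈ Finset.univ.erase i, x j ^ 2) := by
    rw [Finset.mul_sum, ← Finset.sum_add_distrib]
    exact Finset.sum_congr rfl fun i _ => by ring
  have h1 : ∑ i, x i * (x i - 1) * x i = T + 2 * A := by
    rw [hT, hA, Finset.mul_sum, ← Finset.sum_add_distrib]
    exact Finset.sum_congr rfl fun i _ => by ring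
  -- expand squares inside the erased sum
  have hEi : ∀ i : Fin N, ∑ j ∈ Finset.univ.erase i, x j ^ 2
      = (∑ j ∈ Finset.univ.erase i, x j * (x j - 1)) + ∑ j ∈ Finset.univ.erase i, x j := by
    intro i
    rw [← Finset.sum_add_distrib]
    exact Finset.sum_congr rfl fun j _ => by ring
  -- second cross part
  have cross2 : ∑ i, (x i * (x i - 1)) * (∑ j ∈ Finset.univ.erase i, x j) ≤ n * A := by
    calc ∑ i, (x i * (x i - 1)) * (∑ j ∈ Finset.univ.erase i, x j)
        ≤ ∑ i, (x i * (x i - 1)) * n :=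
          Finset.sum_le_sum fun i _ => mul_le_mul_of_nonneg_left (herase_le i) (ha0 i)
      _ = n * A := by rw [hA, Finset.mul_sum]; exact Finset.sum_congr rfl fun i _ => by ring
  -- first cross part via the symmetrization trick
  have cross1 : ∑ i, (x i * (x i - 1)) * (∑ j ∈ Finset.univ.erase i, x j * (x j - 1))
      ≤ n * (T + A) := by
    have e1 : ∑ i, (x i * (x i - 1)) * (∑ j ∈ Finset.univ.erase i, x j * (x j - 1))
        = ∑ i, ∑ j ∈ Finset.univ.erase i, (x i * (x i - 1)) * (x j * (x j - 1)) :=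
      Finset.sum_congr rfl fun i _ => Finset.mul_sum _ _ _
    have e2 : ∑ i, ∑ j ∈ Finset.univ.erase i, (x i * (x i - 1)) * (x j * (x j - 1))
        ≤ ∑ i, ∑ j ∈ Finset.univ.erase i,
            ((x i * x j * (x i - 1) ^ 2 + x j * x i * (x j - 1) ^ 2) / 2) := by
      refine Finset.sum_le_sum fun i _ => Finset.sum_le_sum fun j _ => ?_
      nlinarith [mul_nonneg (mul_nonneg (hx0 i) (hx0 j)) (sq_nonneg (x i - x j))]
    have hsw : ∑ i, ∑ j ∈ Finset.univ.erase i, (x j * x i * (x j - 1) ^ 2)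
        = ∑ i, ∑ j ∈ Finset.univ.erase i, (x i * x j * (x i - 1) ^ 2) :=
      sum_erase_comm (fun i j => x j * x i * (x j - 1) ^ 2)
    have e3 : ∑ i, ∑ j ∈ Finset.univ.erase i,
          ((x i * x j * (x i - 1) ^ 2 + x j * x i * (x j - 1) ^ 2) / 2)
        = ∑ i, ∑ j ∈ Finset.univ.erase i, x i * x j * (x i - 1) ^ 2 := by
      have hsplit : ∑ i, ∑ j ∈ Finset.univ.erase i,
            ((x i * x j * (x i - 1) ^ 2 + x j * x i * (x j - 1) ^ 2) / 2)
          = ((∑ i, ∑ j ∈ Finset.univ.erase i, x i * x j * (x i - 1) ^ 2)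
            + ∑ i, ∑ j ∈ Finset.univ.erase i, x j * x i * (x j - 1) ^ 2) / 2 := by
        calc ∑ i, ∑ j ∈ Finset.univ.erase i,
              ((x i * x j * (x i - 1) ^ 2 + x j * x i * (x j - 1) ^ 2) / 2)
            = ∑ i, (((∑ j ∈ Finset.univ.erase i, x i * x j * (x i - 1) ^ 2)
                + ∑ j ∈ Finset.univ.erase i, x j * x i * (x j - 1) ^ 2) / 2) := by
              refine Finset.sum_congr rfl fun i _ => ?_
              rw [← Finset.sum_div, Finset.sum_add_distrib]
          _ = (∑ i, ((∑ j ∈ Finset.univ.erase i, x i * x j * (x i - 1) ^ 2)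
                + ∑ j ∈ Finset.univ.erase i, x j * x i * (x j - 1) ^ 2)) / 2 := by
              rw [← Finset.sum_div]
          _ = ((∑ i, ∑ j ∈ Finset.univ.erase i, x i * x j * (x i - 1) ^ 2)
            + ∑ i, ∑ j ∈ Finset.univ.erase i, x j * x i * (x j - 1) ^ 2) / 2 := by
              rw [Finset.sum_add_distrib]
      rw [hsplit, hsw]; ring
    have e4 : ∑ i, ∑ j ∈ Finset.univ.erase i, x i * x j * (x i - 1) ^ 2
        = ∑ i, (x i * (x i - 1) ^ 2) * (∑ j ∈ Finset.univ.erase i, x j) := by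
      refine Finset.sum_congr rfl fun i _ => ?_
      rw [Finset.mul_sum]
      exact Finset.sum_congr rfl fun j _ => by ring
    have hxsq0 : ∀ i : Fin N, 0 ≤ x i * (x i - 1) ^ 2 :=
      fun i => mul_nonneg (hx0 i) (sq_nonneg _)
    have e5 : ∑ i, (x i * (x i - 1) ^ 2) * (∑ j ∈ Finset.univ.erase i, x j)
        ≤ n * (T + A) := by
      calc ∑ i, (x i * (x i - 1) ^ 2) * (∑ j ∈ Finset.univ.erase i, x j)
          ≤ ∑ i, (x i * (x i - 1) ^ 2) * n :=
            Finset.sum_le_sum fun i _ => mul_le_mul_of_nonneg_left (herase_le i) (hxsq0 i)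
        _ = n * (T + A) := by
            rw [hT, hA, ← Finset.sum_add_distrib, Finset.mul_sum]
            exact Finset.sum_congr rfl fun i _ => by ring
    calc ∑ i, (x i * (x i - 1)) * (∑ j ∈ Finset.univ.erase i, x j * (x j - 1))
        = ∑ i, ∑ j ∈ Finset.univ.erase i, (x i * (x i - 1)) * (x j * (x j - 1)) := e1
      _ ≤ ∑ i, ∑ j ∈ Finset.univ.erase i,
            ((x i * x j * (x i - 1) ^ 2 + x j * x i * (x j - 1) ^ 2) / 2) := e2
      _ = ∑ i, ∑ j ∈ Finset.univ.erase i, x i * x j * (x i - 1) ^ 2 := e3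
      _ = ∑ i, (x i * (x i - 1) ^ 2) * (∑ j ∈ Finset.univ.erase i, x j) := e4
      _ ≤ n * (T + A) := e5
  -- put the cross terms together
  have hcross : ∑ i, (x i * (x i - 1)) * (∑ j ∈ Finset.univ.erase i, x j ^ 2)
      ≤ n * (T + A) + n * A := by
    have expand : ∑ i, (x i * (x i - 1)) * (∑ j ∈ Finset.univ.erase i, x j ^ 2)
        = (∑ i, (x i * (x i - 1)) * (∑ j ∈ Finset.univ.erase i, x j * (x j - 1)))
          + ∑ i, (x i * (x i - 1)) * (∑ j ∈ Finset.univ.erase i, x j) := by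
      rw [← Finset.sum_add_distrib]
      refine Finset.sum_congr rfl fun i _ => ?_
      rw [hEi i, mul_add]
    rw [expand]
    exact add_le_add cross1 cross2
  have hfinal : (1 / n) * (∑ i, (x i * (x i - 1)) * (∑ j ∈ Finset.univ.erase i, x j ^ 2))
      ≤ T + 2 * A := by
    have h2 : (1 / n) * (∑ i, (x i * (x i - 1)) * (∑ j ∈ Finset.univ.erase i, x j ^ 2))
        ≤ (1 / n) * (n * (T + A) + n * A) :=
      mul_le_mul_of_nonneg_left hcross (by positivity)
    have h3 : (1 / n) * (n * (T + A) + n * A) = T + 2 * A := by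
      field_simp; ring
    linarith
  rw [hS, h1]
  linarith

lemma cast_le_of_sum {N : ℕ} (ν : Fin N → ℕ) (hν : ∑ i, ν i = N) (i : Fin N) :
    ((ν i : ℝ)) ≤ (N : ℝ) := by
  have h : ν i ≤ N := by
    conv_rhs => rw [← hν]
    exact Finset.single_le_sum (f := fun j => ν j) (fun j _ => Nat.zero_le _) (Finset.mem_univ i)
  exact_mod_cast h

lemma key_bound {N : ℕ} (hN : 3 ≤ N) (ν : Fin N → ℕ) (hν : ∑ i, ν i = N) :
    multiRate N ν ≤ 2 * thirdRate N ν + (4 / (N : ℝ)) * pairRate N ν := by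
  have hn3 : (3 : ℝ) ≤ (N : ℝ) := by exact_mod_cast hN
  have hn0 : (0 : ℝ) < (N : ℝ) := by linarith
  have hn1 : (0 : ℝ) < (N : ℝ) - 1 := by linarith
  have hn2 : (0 : ℝ) < (N : ℝ) - 2 := by linarith
  have hsx : ∑ i, ((ν i : ℝ)) = (N : ℝ) := by
    rw [← Nat.cast_sum, hν]
  have hkey := key_sum N (by omega) (fun i => (ν i : ℝ)) (fun i => Nat.cast_nonneg _)
    (fun i => third_term_nonneg (ν i)) (fun i => pair_term_nonneg (ν i)) hsx
  set T : ℝ := ∑ i, (ν i : ℝ) * ((ν i : ℝ) - 1) * ((ν i : ℝ) - 2) with hT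
  set A : ℝ := ∑ i, (ν i : ℝ) * ((ν i : ℝ) - 1) with hA
  have hT0 : 0 ≤ T := Finset.sum_nonneg fun i _ => third_term_nonneg (ν i)
  have hA0 : 0 ≤ A := Finset.sum_nonneg fun i _ => pair_term_nonneg (ν i)
  have step1 : multiRate N ν ≤ (1 / ((N : ℝ) ^ 2 * ((N : ℝ) - 1))) * (2 * T + 4 * A) := by
    unfold multiRate
    have hc : (0 : ℝ) ≤ 1 / ((N : ℝ) ^ 2 * ((N : ℝ) - 1)) := by positivity
    exact mul_le_mul_of_nonneg_left hkey hc
  have step2 : (1 / ((N : ℝ) ^ 2 * ((N : ℝ) - 1))) * (2 * T + 4 * A)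
      ≤ 2 * thirdRate N ν + (4 / (N : ℝ)) * pairRate N ν := by
    unfold thirdRate pairRate
    rw [← hT, ← hA]
    have hTle : (1 / ((N : ℝ) ^ 2 * ((N : ℝ) - 1))) * (2 * T)
        ≤ 2 * ((1 / ((N : ℝ) * ((N : ℝ) - 1) * ((N : ℝ) - 2))) * T) := by
      have hcmp : (1 : ℝ) / ((N : ℝ) ^ 2 * ((N : ℝ) - 1))
          ≤ 1 / ((N : ℝ) * ((N : ℝ) - 1) * ((N : ℝ) - 2)) := by
        apply one_div_le_one_div_of_le
        · positivity
        · nlinarith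
      nlinarith [mul_le_mul_of_nonneg_right hcmp hT0]
    have hAeq : (1 / ((N : ℝ) ^ 2 * ((N : ℝ) - 1))) * (4 * A)
        = (4 / (N : ℝ)) * ((1 / ((N : ℝ) * ((N : ℝ) - 1))) * A) := by
      field_simp
      try ring
      try tauto
    calc (1 / ((N : ℝ) ^ 2 * ((N : ℝ) - 1))) * (2 * T + 4 * A)
        = (1 / ((N : ℝ) ^ 2 * ((N : ℝ) - 1))) * (2 * T)
          + (1 / ((N : ℝ) ^ 2 * ((N : ℝ) - 1))) * (4 * A) := by ring
      _ ≤ 2 * ((1 / ((N : ℝ) * ((N : ℝ) - 1) * ((N : ℝ) - 2))) * T)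
          + (4 / (N : ℝ)) * ((1 / ((N : ℝ) * ((N : ℝ) - 1))) * A) := by
          rw [hAeq]; exact add_le_add hTle le_rfl
  exact step1.trans step2

lemma pairRate_le_one {N : ℕ} (hN : 3 ≤ N) (ν : Fin N → ℕ) (hν : ∑ i, ν i = N) :
    pairRate N ν ≤ 1 := by
  have hn3 : (3 : ℝ) ≤ (N : ℝ) := by exact_mod_cast hN
  have hn0 : (0 : ℝ) < (N : ℝ) := by linarith
  have hn1 : (0 : ℝ) < (N : ℝ) - 1 := by linarith
  unfold pairRate
  have hsum : ∑ i, (ν i : ℝ) * ((ν i : ℝ) - 1) ≤ (N : ℝ) * ((N : ℝ) - 1) := by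
    have hsx : ∑ i, ((ν i : ℝ)) = (N : ℝ) := by rw [← Nat.cast_sum, hν]
    calc ∑ i, (ν i : ℝ) * ((ν i : ℝ) - 1)
        ≤ ∑ i, (ν i : ℝ) * ((N : ℝ) - 1) := by
          refine Finset.sum_le_sum fun i _ => ?_
          have h1 : ((ν i : ℝ)) - 1 ≤ (N : ℝ) - 1 := by
            have := cast_le_of_sum ν hν i; linarith
          exact mul_le_mul_of_nonneg_left h1 (Nat.cast_nonneg _)
      _ = (N : ℝ) * ((N : ℝ) - 1) := by rw [← Finset.sum_mul, hsx]
  have hc : (0:ℝ) ≤ 1 / ((N:ℝ) * ((N:ℝ) - 1)) := by positivity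
  have h2 := mul_le_mul_of_nonneg_left hsum hc
  have heq : (1 / ((N:ℝ) * ((N:ℝ) - 1))) * ((N:ℝ) * ((N:ℝ) - 1)) = 1 := by
    field_simp
  linarith

lemma thirdRate_le {N : ℕ} (hN : 3 ≤ N) (ν : Fin N → ℕ) (hν : ∑ i, ν i = N) :
    thirdRate N ν ≤ (N : ℝ) ^ 4 := by
  have hn3 : (3 : ℝ) ≤ (N : ℝ) := by exact_mod_cast hN
  unfold thirdRate
  have hn0 : (0 : ℝ) < (N : ℝ) := by linarith
  have hn1 : (0 : ℝ) < (N : ℝ) - 1 := by linarith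
  have hn2 : (0 : ℝ) < (N : ℝ) - 2 := by linarith
  have hpos : (0:ℝ) < (N : ℝ) * ((N : ℝ) - 1) * ((N : ℝ) - 2) :=
    mul_pos (mul_pos hn0 hn1) hn2
  have hcoef : 1 / ((N : ℝ) * ((N : ℝ) - 1) * ((N : ℝ) - 2)) ≤ 1 := by
    rw [div_le_one hpos]
    have q1 : (2:ℝ) ≤ (N:ℝ) - 1 := by linarith
    have q2 : (1:ℝ) ≤ (N:ℝ) - 2 := by linarith
    have q3 : (6:ℝ) ≤ (N:ℝ) * ((N:ℝ) - 1) := by nlinarith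
    nlinarith
  have hsum : ∑ i, (ν i : ℝ) * ((ν i : ℝ) - 1) * ((ν i : ℝ) - 2) ≤ (N : ℝ) ^ 4 := by
    calc ∑ i, (ν i : ℝ) * ((ν i : ℝ) - 1) * ((ν i : ℝ) - 2)
        ≤ ∑ _i : Fin N, (N : ℝ) ^ 3 := by
          refine Finset.sum_le_sum fun i _ => ?_
          have h1 := cast_le_of_sum ν hν i
          have h2 : (0:ℝ) ≤ (ν i : ℝ) := Nat.cast_nonneg _
          rcases Nat.lt_or_ge (ν i) 3 with hcase | hcase
          · have hz : (ν i : ℝ) * ((ν i : ℝ) - 1) * ((ν i : ℝ) - 2) = 0 := by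
              have : ν i = 0 ∨ ν i = 1 ∨ ν i = 2 := by omega
              rcases this with h | h | h <;> rw [h] <;> norm_num
            rw [hz]; positivity
          · have h3 : (3:ℝ) ≤ (ν i : ℝ) := by exact_mod_cast hcase
            have p1 : (ν i : ℝ) * ((ν i : ℝ) - 1) ≤ (N:ℝ) * (N:ℝ) := by nlinarith
            nlinarith
      _ = (N : ℝ) * (N : ℝ) ^ 3 := by
          rw [Finset.sum_const, Finset.card_univ, Fintype.card_fin]; ring
      _ ≤ (N : ℝ) ^ 4 := by nlinarith
  have h0 : 0 ≤ ∑ i, (ν i : ℝ) * ((ν i : ℝ) - 1) * ((ν i : ℝ) - 2) :=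
    Finset.sum_nonneg fun i _ => third_term_nonneg (ν i)
  calc (1 / ((N : ℝ) * ((N : ℝ) - 1) * ((N : ℝ) - 2))) *
        ∑ i, (ν i : ℝ) * ((ν i : ℝ) - 1) * ((ν i : ℝ) - 2)
      ≤ 1 * ∑ i, (ν i : ℝ) * ((ν i : ℝ) - 1) * ((ν i : ℝ) - 2) :=
        mul_le_mul_of_nonneg_right hcoef h0
    _ ≤ (N : ℝ) ^ 4 := by rw [one_mul]; exact hsum

lemma third_term_le (x n : ℕ) (hx : (x:ℝ) ≤ (n:ℝ)) (hn : (3:ℝ) ≤ (n:ℝ)) :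
    (x:ℝ) * ((x:ℝ) - 1) * ((x:ℝ) - 2) ≤ (n:ℝ)^3 := by
  have h2 : (0:ℝ) ≤ (x : ℝ) := Nat.cast_nonneg _
  rcases Nat.lt_or_ge x 3 with hcase | hcase
  · have hz : (x : ℝ) * ((x : ℝ) - 1) * ((x : ℝ) - 2) = 0 := by
      have : x = 0 ∨ x = 1 ∨ x = 2 := by omega
      rcases this with h | h | h <;> rw [h] <;> norm_num
    rw [hz]; positivity
  · have h3 : (3:ℝ) ≤ (x : ℝ) := by exact_mod_cast hcase
    have p1 : (x : ℝ) * ((x : ℝ) - 1) ≤ (n:ℝ) * (n:ℝ) := by nlinarith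
    nlinarith

lemma pair_term_le (x n : ℕ) (hx : (x:ℝ) ≤ (n:ℝ)) :
    (x:ℝ) * ((x:ℝ) - 1) ≤ (n:ℝ)^2 := by
  have h2 : (0:ℝ) ≤ (x : ℝ) := Nat.cast_nonneg _
  nlinarith

/-- Membership in the pathwise time window, in terms of the generalized inverse. -/
lemma mem_interval_iff (q : ℕ → ℝ) (s t : ℝ)
    (hne_s : {u : ℕ | 1 ≤ u ∧ s ≤ ∑ v ∈ Finset.Icc 1 u, q v}.Nonempty)
    (hne_t : {u : ℕ | 1 ≤ u ∧ t ≤ ∑ v ∈ Finset.Icc 1 u, q v}.Nonempty) (r : ℕ) :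
    ((∃ u ∈ Finset.Icc 1 (r - 1), s ≤ ∑ v ∈ Finset.Icc 1 u, q v) ∧
      ∀ u ∈ Finset.Icc 1 (r - 1), (∑ v ∈ Finset.Icc 1 u, q v) < t)
    ↔ (genInv q s + 1 ≤ r ∧ r ≤ genInv q t) := by
  have hs_mem : genInv q s ∈ {u : ℕ | 1 ≤ u ∧ s ≤ ∑ v ∈ Finset.Icc 1 u, q v} :=
    Nat.sInf_mem hne_s
  have ht_mem : genInv q t ∈ {u : ℕ | 1 ≤ u ∧ t ≤ ∑ v ∈ Finset.Icc 1 u, q v} :=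
    Nat.sInf_mem hne_t
  constructor
  · rintro ⟨⟨u, hu, hsu⟩, hall⟩
    rw [Finset.mem_Icc] at hu
    have h1 : genInv q s ≤ u := Nat.sInf_le ⟨hu.1, hsu⟩
    constructor
    · omega
    · by_contra hcon
      push_neg at hcon
      have hk : genInv q t ∈ Finset.Icc 1 (r-1) := Finset.mem_Icc.mpr ⟨ht_mem.1, by omega⟩
      exact absurd (hall _ hk) (not_lt.mpr ht_mem.2)
  · rintro ⟨h1, h2⟩
    constructor
    · exact ⟨genInv q s, Finset.mem_Icc.mpr ⟨hs_mem.1, by omega⟩, hs_mem.2⟩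
    · intro u hu
      rw [Finset.mem_Icc] at hu
      have hlt : u < genInv q t := by omega
      have hnm := Nat.notMem_of_lt_sInf hlt
      simp only [Set.mem_setOf_eq, not_and, not_le] at hnm
      exact hnm hu.1

/-- Pathwise bound on the cumulated pair rate over the rescaled window. -/
lemma cumul_le (q : ℕ → ℝ) (s t : ℝ) (ht0 : 0 ≤ t) (hq0 : ∀ v, 0 ≤ q v)
    (hq1 : ∀ v, 1 ≤ v → q v ≤ 1)
    (hne_t : {u : ℕ | 1 ≤ u ∧ t ≤ ∑ v ∈ Finset.Icc 1 u, q v}.Nonempty) :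
    ∑ r ∈ Finset.Icc (genInv q s + 1) (genInv q t), q r ≤ t + 1 := by
  have ht_mem : genInv q t ∈ {u : ℕ | 1 ≤ u ∧ t ≤ ∑ v ∈ Finset.Icc 1 u, q v} :=
    Nat.sInf_mem hne_t
  have hk1 : 1 ≤ genInv q t := ht_mem.1
  obtain ⟨j, hjk⟩ : ∃ j, genInv q t = j + 1 := ⟨genInv q t - 1, by omega⟩
  have hsub : ∑ r ∈ Finset.Icc (genInv q s + 1) (genInv q t), q r
      ≤ ∑ r ∈ Finset.Icc 1 (genInv q t), q r :=
    Finset.sum_le_sum_of_subset_of_nonneg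
      (Finset.Icc_subset_Icc (by omega) le_rfl) (fun i _ _ => hq0 i)
  have hsplit : ∑ r ∈ Finset.Icc 1 (j + 1), q r
      = (∑ r ∈ Finset.Icc 1 j, q r) + q (j + 1) :=
    Finset.sum_Icc_succ_top (by omega) q
  have hlast : q (j + 1) ≤ 1 := hq1 _ (by omega)
  have hjle : (∑ r ∈ Finset.Icc 1 j, q r) ≤ t := by
    rcases Nat.eq_zero_or_pos j with h0 | h0
    · subst h0; simpa using ht0
    · have hltj : j < genInv q t := by omega
      have hnm := Nat.notMem_of_lt_sInf hltj
      simp only [Set.mem_setOf_eq, not_and, not_le] at hnm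
      exact le_of_lt (hnm h0)
  calc ∑ r ∈ Finset.Icc (genInv q s + 1) (genInv q t), q r
      ≤ ∑ r ∈ Finset.Icc 1 (genInv q t), q r := hsub
    _ = (∑ r ∈ Finset.Icc 1 j, q r) + q (j + 1) := by rw [hjk, hsplit]
    _ ≤ t + 1 := add_le_add hjle hlast

/-- The `F_{r-1}`-measurable version of the event `τ_N(s) < r ≤ τ_N(t)`. -/
def BSET {Ω : Type*} (N : ℕ) (ν : ℕ → Fin N → Ω → ℕ) (s t : ℝ) (r : ℕ) : Set Ω :=
  {ω | (∃ u ∈ Finset.Icc 1 (r - 1),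
          s ≤ ∑ v ∈ Finset.Icc 1 u, pairRate N (fun i => ν v i ω)) ∧
       ∀ u ∈ Finset.Icc 1 (r - 1),
          (∑ v ∈ Finset.Icc 1 u, pairRate N (fun i => ν v i ω)) < t}

lemma main_bound {Ω : Type*} [m0 : MeasurableSpace Ω] (P : Measure Ω)
    [IsProbabilityMeasure P] (F : Filtration ℕ m0) (N : ℕ) (hN3 : 3 ≤ N)
    (ν : ℕ → Fin N → Ω → ℕ)
    (hadapted : ∀ r i, Measurable[F r] (ν r i))
    (hsum : ∀ r : ℕ, 1 ≤ r → ∀ᵐ ω ∂P, ∑ i, ν r i ω = N)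
    (hfin : ∀ u : ℝ, ∀ᵐ ω ∂P, {s' : ℕ | 1 ≤ s' ∧ u ≤ ∑ r ∈ Finset.Icc 1 s',
        pairRate N (fun i => ν r i ω)}.Nonempty)
    (β : ℝ)
    (hmom : ∀ r : ℕ, 1 ≤ r → ∀ᵐ ω ∂P,
      (1 / ((N : ℝ) * (N - 1) * (N - 2))) *
          ∑ i, condExp (F (r - 1)) P
            (fun ω' => (ν r i ω' : ℝ) * ((ν r i ω' : ℝ) - 1) * ((ν r i ω' : ℝ) - 2)) ω ≤
        β * ((1 / ((N : ℝ) * (N - 1))) *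
          ∑ i, condExp (F (r - 1)) P
            (fun ω' => (ν r i ω' : ℝ) * ((ν r i ω' : ℝ) - 1)) ω))
    (s t : ℝ) (hs : 0 ≤ s) (hst : s < t) :
    ∫ ω, ∑ r ∈ Finset.Icc
        (genInv (fun r => pairRate N (fun i => ν r i ω)) s + 1)
        (genInv (fun r => pairRate N (fun i => ν r i ω)) t),
      multiRate N (fun i => ν r i ω) ∂P ≤ |2 * β + 4 / (N : ℝ)| * (t + 1) := by
  classical
  have htpos : 0 < t := lt_of_le_of_lt hs hst
  have hn3 : (3:ℝ) ≤ (N:ℝ) := by exact_mod_cast hN3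
  have hn0 : (0:ℝ) < N := by linarith
  -- measurability of the basic real-valued processes
  have hxm : ∀ r i, Measurable[F r] (fun ω => (ν r i ω : ℝ)) :=
    fun r i => measurable_from_top.comp (hadapted r i)
  have hcmF : ∀ r, Measurable[F r] (fun ω => pairRate N (fun i => ν r i ω)) := by
    intro r
    have h : (fun ω => pairRate N (fun i => ν r i ω))
        = fun ω => (1 / ((N : ℝ) * ((N:ℝ) - 1))) *
            ∑ i, (ν r i ω : ℝ) * ((ν r i ω : ℝ) - 1) := rfl
    rw [h]
    exact (Finset.measurable_sum _ fun i _ =>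
      ((hxm r i).mul ((hxm r i).sub measurable_const))).const_mul _
  have hDmF : ∀ r, Measurable[F r] (fun ω => multiRate N (fun i => ν r i ω)) := by
    intro r
    have h : (fun ω => multiRate N (fun i => ν r i ω))
        = fun ω => (1 / ((N : ℝ)^2 * ((N:ℝ) - 1))) *
            ∑ i, (ν r i ω : ℝ) * ((ν r i ω : ℝ) - 1) *
              ((ν r i ω : ℝ) +
                (1/(N:ℝ)) * ∑ j ∈ Finset.univ.erase i, (ν r j ω : ℝ)^2) := rfl
    rw [h]
    refine (Finset.measurable_sum _ fun i _ => ?_).const_mul _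
    refine ((hxm r i).mul ((hxm r i).sub measurable_const)).mul ?_
    refine (hxm r i).add (Measurable.const_mul ?_ _)
    exact Finset.measurable_sum _ fun j _ => (hxm r j).pow_const 2
  have hAmF : ∀ r, Measurable[F r] (fun ω => thirdRate N (fun i => ν r i ω)) := by
    intro r
    have h : (fun ω => thirdRate N (fun i => ν r i ω))
        = fun ω => (1 / ((N : ℝ) * ((N:ℝ) - 1) * ((N:ℝ) - 2))) *
            ∑ i, (ν r i ω : ℝ) * ((ν r i ω : ℝ) - 1) * ((ν r i ω : ℝ) - 2) := rfl
    rw [h]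
    exact (Finset.measurable_sum _ fun i _ =>
      (((hxm r i).mul ((hxm r i).sub measurable_const)).mul
        ((hxm r i).sub measurable_const))).const_mul _
  have hcm : ∀ r, Measurable (fun ω => pairRate N (fun i => ν r i ω)) :=
    fun r => (hcmF r).mono (F.le r) le_rfl
  have hDm : ∀ r, Measurable (fun ω => multiRate N (fun i => ν r i ω)) :=
    fun r => (hDmF r).mono (F.le r) le_rfl
  have hAm : ∀ r, Measurable (fun ω => thirdRate N (fun i => ν r i ω)) :=
    fun r => (hAmF r).mono (F.le r) le_rfl
  -- measurability of the window events
  have hPsmF : ∀ (r u : ℕ), u ≤ r - 1 →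
      Measurable[F (r-1)]
        (fun ω => ∑ v ∈ Finset.Icc 1 u, pairRate N (fun i => ν v i ω)) := by
    intro r u hu
    apply Finset.measurable_sum
    intro v hv
    have hv' : v ≤ r - 1 := le_trans (Finset.mem_Icc.mp hv).2 hu
    exact (hcmF v).mono (F.mono hv') le_rfl
  have hBmsF : ∀ r, MeasurableSet[F (r-1)] (BSET N ν s t r) := by
    intro r
    have h : BSET N ν s t r =
        (⋃ u ∈ Finset.Icc 1 (r-1),
          {ω | s ≤ ∑ v ∈ Finset.Icc 1 u, pairRate N (fun i => ν v i ω)}) ∩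
        (⋂ u ∈ Finset.Icc 1 (r-1),
          {ω | (∑ v ∈ Finset.Icc 1 u, pairRate N (fun i => ν v i ω)) < t}) := by
      ext ω
      simp [BSET, Set.mem_iUnion, Set.mem_iInter]
    rw [h]
    refine MeasurableSet.inter ?_ ?_
    · refine MeasurableSet.biUnion (Finset.Icc 1 (r-1)).countable_toSet (fun u hu => ?_)
      have hu' : u ≤ r - 1 := (Finset.mem_Icc.mp (Finset.mem_coe.mp hu)).2
      exact measurableSet_le measurable_const (hPsmF r u hu')
    · refine MeasurableSet.biInter (Finset.Icc 1 (r-1)).countable_toSet (fun u hu => ?_)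
      have hu' : u ≤ r - 1 := (Finset.mem_Icc.mp (Finset.mem_coe.mp hu)).2
      exact measurableSet_lt (hPsmF r u hu') measurable_const
  have hBms : ∀ r, MeasurableSet (BSET N ν s t r) := fun r => (F.le (r-1)) _ (hBmsF r)
  -- a.e. pathwise bounds coming from ∑ ν = N
  have hbound : ∀ r : ℕ, 1 ≤ r → ∀ᵐ ω ∂P,
      0 ≤ multiRate N (fun i => ν r i ω) ∧
      multiRate N (fun i => ν r i ω)
        ≤ 2 * thirdRate N (fun i => ν r i ω) + (4/(N:ℝ)) * pairRate N (fun i => ν r i ω) ∧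
      pairRate N (fun i => ν r i ω) ≤ 1 ∧ 0 ≤ pairRate N (fun i => ν r i ω) ∧
      thirdRate N (fun i => ν r i ω) ≤ (N:ℝ)^4 ∧
      0 ≤ thirdRate N (fun i => ν r i ω) := by
    intro r hr
    filter_upwards [hsum r hr] with ω hω
    exact ⟨multiRate_nonneg N _, key_bound hN3 _ hω, pairRate_le_one hN3 _ hω,
      pairRate_nonneg N _, thirdRate_le hN3 _ hω, thirdRate_nonneg N hN3 _⟩
  -- integrability
  have hcint : ∀ r, 1 ≤ r → Integrable (fun ω => pairRate N (fun i => ν r i ω)) P := by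
    intro r hr
    refine Integrable.mono' (integrable_const (1:ℝ)) ((hcm r).aestronglyMeasurable) ?_
    filter_upwards [hbound r hr] with ω h
    rw [Real.norm_eq_abs, abs_of_nonneg h.2.2.2.1]
    exact h.2.2.1
  have hAint : ∀ r, 1 ≤ r → Integrable (fun ω => thirdRate N (fun i => ν r i ω)) P := by
    intro r hr
    refine Integrable.mono' (integrable_const ((N:ℝ)^4)) ((hAm r).aestronglyMeasurable) ?_
    filter_upwards [hbound r hr] with ω h
    rw [Real.norm_eq_abs, abs_of_nonneg h.2.2.2.2.2]
    exact h.2.2.2.2.1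
  have hDint : ∀ r, 1 ≤ r → Integrable (fun ω => multiRate N (fun i => ν r i ω)) P := by
    intro r hr
    refine Integrable.mono' (integrable_const (2*(N:ℝ)^4 + 4)) ((hDm r).aestronglyMeasurable) ?_
    filter_upwards [hbound r hr] with ω h
    obtain ⟨h0, hk, hc1, hc0, hA1, hA0⟩ := h
    rw [Real.norm_eq_abs, abs_of_nonneg h0]
    have h4N : 4/(N:ℝ) ≤ 4 := by
      rw [div_le_iff₀ hn0]; nlinarith
    have hprod : (4/(N:ℝ)) * pairRate N (fun i => ν r i ω) ≤ 4 * 1 := by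
      apply mul_le_mul h4N hc1 hc0 (by norm_num)
    linarith
  have hf3int : ∀ r, 1 ≤ r → ∀ i, Integrable
      (fun ω' => (ν r i ω' : ℝ) * ((ν r i ω' : ℝ) - 1) * ((ν r i ω' : ℝ) - 2)) P := by
    intro r hr i
    have hm3 : Measurable (fun ω' => (ν r i ω' : ℝ) * ((ν r i ω' : ℝ) - 1) * ((ν r i ω' : ℝ) - 2)) := by
      have hx := (hxm r i).mono (F.le r) le_rfl
      exact (hx.mul (hx.sub measurable_const)).mul (hx.sub measurable_const)
    refine Integrable.mono' (integrable_const ((N:ℝ)^3)) hm3.aestronglyMeasurable ?_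
    filter_upwards [hsum r hr] with ω hω
    rw [Real.norm_eq_abs, abs_of_nonneg (third_term_nonneg _)]
    exact third_term_le _ _ (cast_le_of_sum _ hω i) hn3
  have hf2int : ∀ r, 1 ≤ r → ∀ i, Integrable
      (fun ω' => (ν r i ω' : ℝ) * ((ν r i ω' : ℝ) - 1)) P := by
    intro r hr i
    have hm2 : Measurable (fun ω' => (ν r i ω' : ℝ) * ((ν r i ω' : ℝ) - 1)) := by
      have hx := (hxm r i).mono (F.le r) le_rfl
      exact hx.mul (hx.sub measurable_const)
    refine Integrable.mono' (integrable_const ((N:ℝ)^2)) hm2.aestronglyMeasurable ?_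
    filter_upwards [hsum r hr] with ω hω
    rw [Real.norm_eq_abs, abs_of_nonneg (pair_term_nonneg _)]
    exact pair_term_le _ _ (cast_le_of_sum _ hω i)
  -- conditional expectation identities
  have hcond3 : ∀ r : ℕ, 1 ≤ r →
      (condExp (F (r-1)) P (fun ω => thirdRate N (fun i => ν r i ω)))
        =ᵐ[P] fun ω => (1 / ((N : ℝ) * ((N:ℝ) - 1) * ((N:ℝ) - 2))) *
          ∑ i, condExp (F (r-1)) P
            (fun ω' => (ν r i ω' : ℝ) * ((ν r i ω' : ℝ) - 1) * ((ν r i ω' : ℝ) - 2)) ω := by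
    intro r hr
    have heq : (fun ω => thirdRate N (fun i => ν r i ω))
        = (1 / ((N : ℝ) * ((N:ℝ) - 1) * ((N:ℝ) - 2))) •
          (∑ i : Fin N, fun ω' =>
            (ν r i ω' : ℝ) * ((ν r i ω' : ℝ) - 1) * ((ν r i ω' : ℝ) - 2)) := by
      funext ω
      simp [thirdRate, Finset.sum_apply, smul_eq_mul]
    rw [heq]
    have h1 := condExp_smul (m := F (r-1)) (μ := P)
      ((1:ℝ) / ((N : ℝ) * ((N:ℝ) - 1) * ((N:ℝ) - 2)))
      (∑ i : Fin N, fun ω' =>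
        (ν r i ω' : ℝ) * ((ν r i ω' : ℝ) - 1) * ((ν r i ω' : ℝ) - 2))
    have h2 := condExp_finset_sum (m := F (r-1)) (μ := P)
      (f := fun i => fun ω' =>
        (ν r i ω' : ℝ) * ((ν r i ω' : ℝ) - 1) * ((ν r i ω' : ℝ) - 2))
      (s := Finset.univ) (fun i _ => hf3int r hr i)
    filter_upwards [h1, h2] with ω e1 e2
    rw [e1]
    simp only [Pi.smul_apply, smul_eq_mul]
    congr 1
    rw [e2, Finset.sum_apply]
  have hcond2 : ∀ r : ℕ, 1 ≤ r →
      (condExp (F (r-1)) P (fun ω => pairRate N (fun i => ν r i ω)))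
        =ᵐ[P] fun ω => (1 / ((N : ℝ) * ((N:ℝ) - 1))) *
          ∑ i, condExp (F (r-1)) P
            (fun ω' => (ν r i ω' : ℝ) * ((ν r i ω' : ℝ) - 1)) ω := by
    intro r hr
    have heq : (fun ω => pairRate N (fun i => ν r i ω))
        = (1 / ((N : ℝ) * ((N:ℝ) - 1))) •
          (∑ i : Fin N, fun ω' => (ν r i ω' : ℝ) * ((ν r i ω' : ℝ) - 1)) := by
      funext ω
      simp [pairRate, Finset.sum_apply, smul_eq_mul]
    rw [heq]
    have h1 := condExp_smul (m := F (r-1)) (μ := P)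
      ((1:ℝ) / ((N : ℝ) * ((N:ℝ) - 1)))
      (∑ i : Fin N, fun ω' => (ν r i ω' : ℝ) * ((ν r i ω' : ℝ) - 1))
    have h2 := condExp_finset_sum (m := F (r-1)) (μ := P)
      (f := fun i => fun ω' => (ν r i ω' : ℝ) * ((ν r i ω' : ℝ) - 1))
      (s := Finset.univ) (fun i _ => hf2int r hr i)
    filter_upwards [h1, h2] with ω e1 e2
    rw [e1]
    simp only [Pi.smul_apply, smul_eq_mul]
    congr 1
    rw [e2, Finset.sum_apply]
  have hcondle : ∀ r : ℕ, 1 ≤ r → ∀ᵐ ω ∂P,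
      condExp (F (r-1)) P (fun ω => thirdRate N (fun i => ν r i ω)) ω
        ≤ β * condExp (F (r-1)) P (fun ω => pairRate N (fun i => ν r i ω)) ω := by
    intro r hr
    filter_upwards [hcond3 r hr, hcond2 r hr, hmom r hr] with ω e3 e2 hm
    rw [e3, e2]
    exact hm
  -- the per-r set-integral inequality
  have hsetint : ∀ r : ℕ, 1 ≤ r →
      ∫ ω in BSET N ν s t r, multiRate N (fun i => ν r i ω) ∂P
        ≤ (2*β + 4/(N:ℝ)) * ∫ ω in BSET N ν s t r, pairRate N (fun i => ν r i ω) ∂P := by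
    intro r hr
    have hmle : F (r-1) ≤ m0 := F.le (r-1)
    have hBm : MeasurableSet (BSET N ν s t r) := hBms r
    have step1 : ∫ ω in BSET N ν s t r, multiRate N (fun i => ν r i ω) ∂P
        ≤ ∫ ω in BSET N ν s t r,
            (2 * thirdRate N (fun i => ν r i ω)
              + (4/(N:ℝ)) * pairRate N (fun i => ν r i ω)) ∂P := by
      refine integral_mono_ae ((hDint r hr).restrict)
        ((((hAint r hr).const_mul 2).add ((hcint r hr).const_mul (4/(N:ℝ)))).restrict) ?_
      refine ae_restrict_of_ae ?_
      filter_upwards [hbound r hr] with ω h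
      exact h.2.1
    have step2 : ∫ ω in BSET N ν s t r,
          (2 * thirdRate N (fun i => ν r i ω)
            + (4/(N:ℝ)) * pairRate N (fun i => ν r i ω)) ∂P
        = 2 * (∫ ω in BSET N ν s t r, thirdRate N (fun i => ν r i ω) ∂P)
          + (4/(N:ℝ)) * ∫ ω in BSET N ν s t r, pairRate N (fun i => ν r i ω) ∂P := by
      rw [integral_add (((hAint r hr).const_mul 2).restrict)
        (((hcint r hr).const_mul (4/(N:ℝ))).restrict), integral_const_mul, integral_const_mul]
    have step3 : ∫ ω in BSET N ν s t r, thirdRate N (fun i => ν r i ω) ∂P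
        ≤ β * ∫ ω in BSET N ν s t r, pairRate N (fun i => ν r i ω) ∂P := by
      rw [← setIntegral_condExp hmle (hAint r hr) (hBmsF r),
          ← setIntegral_condExp hmle (hcint r hr) (hBmsF r), ← integral_const_mul]
      refine integral_mono_ae (integrable_condExp.restrict)
        ((integrable_condExp.const_mul β).restrict) ?_
      exact ae_restrict_of_ae (hcondle r hr)
    have hcB0 : 0 ≤ ∫ ω in BSET N ν s t r, pairRate N (fun i => ν r i ω) ∂P :=
      setIntegral_nonneg hBm (fun ω _ => pairRate_nonneg N _)
    calc ∫ ω in BSET N ν s t r, multiRate N (fun i => ν r i ω) ∂P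
        ≤ 2 * (∫ ω in BSET N ν s t r, thirdRate N (fun i => ν r i ω) ∂P)
          + (4/(N:ℝ)) * ∫ ω in BSET N ν s t r, pairRate N (fun i => ν r i ω) ∂P := by
          rw [← step2]; exact step1
      _ ≤ 2 * (β * ∫ ω in BSET N ν s t r, pairRate N (fun i => ν r i ω) ∂P)
          + (4/(N:ℝ)) * ∫ ω in BSET N ν s t r, pairRate N (fun i => ν r i ω) ∂P := by
          linarith
      _ = (2*β + 4/(N:ℝ)) * ∫ ω in BSET N ν s t r, pairRate N (fun i => ν r i ω) ∂P := by
          ring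
  -- abbreviation for the error factor
  set ε : ℝ := |2 * β + 4 / (N : ℝ)| with hε
  have hε0 : (0:ℝ) ≤ ε := abs_nonneg _
  -- the combined a.e. event
  have hsumae : ∀ᵐ ω ∂P, ∀ r : ℕ, 1 ≤ r → ∑ i, ν r i ω = N := by
    rw [ae_all_iff]
    intro r
    by_cases hr : 1 ≤ r
    · filter_upwards [hsum r hr] with ω h _
      exact h
    · filter_upwards with ω h
      exact absurd h hr
  have hEae : ∀ᵐ ω ∂P, (∀ r : ℕ, 1 ≤ r → ∑ i, ν r i ω = N) ∧
      {s' : ℕ | 1 ≤ s' ∧ s ≤ ∑ r ∈ Finset.Icc 1 s', pairRate N (fun i => ν r i ω)}.Nonempty ∧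
      {s' : ℕ | 1 ≤ s' ∧ t ≤ ∑ r ∈ Finset.Icc 1 s', pairRate N (fun i => ν r i ω)}.Nonempty :=
    hsumae.and ((hfin s).and (hfin t))
  have hmemω : ∀ ω : Ω,
      {s' : ℕ | 1 ≤ s' ∧ s ≤ ∑ r ∈ Finset.Icc 1 s', pairRate N (fun i => ν r i ω)}.Nonempty →
      {s' : ℕ | 1 ≤ s' ∧ t ≤ ∑ r ∈ Finset.Icc 1 s', pairRate N (fun i => ν r i ω)}.Nonempty →
      ∀ r : ℕ, ω ∈ BSET N ν s t r ↔
        (genInv (fun v => pairRate N (fun i => ν v i ω)) s + 1 ≤ r ∧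
         r ≤ genInv (fun v => pairRate N (fun i => ν v i ω)) t) :=
    fun ω h2 h3 r => mem_interval_iff (fun v => pairRate N (fun i => ν v i ω)) s t h2 h3 r
  -- pointwise identification of the integrand with a series of indicators
  have hkey_pt : ∀ᵐ ω ∂P, ENNReal.ofReal (∑ r ∈ Finset.Icc
        (genInv (fun r => pairRate N (fun i => ν r i ω)) s + 1)
        (genInv (fun r => pairRate N (fun i => ν r i ω)) t),
      multiRate N (fun i => ν r i ω))
      = ∑' r : ℕ, (BSET N ν s t r).indicator
          (fun ω' => ENNReal.ofReal (multiRate N (fun i => ν r i ω'))) ω := by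
    filter_upwards [hEae] with ω hω
    obtain ⟨h1, h2, h3⟩ := hω
    have hmem := hmemω ω h2 h3
    rw [eq_comm]
    rw [tsum_eq_sum (s := Finset.Icc
        (genInv (fun v => pairRate N (fun i => ν v i ω)) s + 1)
        (genInv (fun v => pairRate N (fun i => ν v i ω)) t))
      (fun r hr => Set.indicator_of_notMem
        (fun hmem' => hr (Finset.mem_Icc.mpr ((hmem r).mp hmem'))) _)]
    rw [ENNReal.ofReal_sum_of_nonneg (fun r _ => multiRate_nonneg N _)]
    refine Finset.sum_congr rfl fun r hrIcc => ?_
    rw [Set.indicator_of_mem ((hmem r).mpr (Finset.mem_Icc.mp hrIcc))]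
  -- measurability of the indicator summands
  have hhmD : ∀ r : ℕ, Measurable ((BSET N ν s t r).indicator
      (fun ω' => ENNReal.ofReal (multiRate N (fun i => ν r i ω')))) :=
    fun r => (ENNReal.measurable_ofReal.comp (hDm r)).indicator (hBms r)
  have hhmc : ∀ r : ℕ, Measurable ((BSET N ν s t r).indicator
      (fun ω' => ENNReal.ofReal (pairRate N (fun i => ν r i ω')))) :=
    fun r => (ENNReal.measurable_ofReal.comp (hcm r)).indicator (hBms r)
  have hB0 : BSET N ν s t 0 = ∅ := by
    ext ω
    simp [BSET]
  -- per-r lintegral bound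
  have hlint : ∀ r : ℕ,
      ∫⁻ ω, (BSET N ν s t r).indicator
          (fun ω' => ENNReal.ofReal (multiRate N (fun i => ν r i ω'))) ω ∂P
        ≤ ENNReal.ofReal ε * ∫⁻ ω, (BSET N ν s t r).indicator
          (fun ω' => ENNReal.ofReal (pairRate N (fun i => ν r i ω'))) ω ∂P := by
    intro r
    rcases Nat.eq_zero_or_pos r with rfl | hr
    · simp [hB0]
    · rw [lintegral_indicator (hBms r) _, lintegral_indicator (hBms r) _]
      rw [← ofReal_integral_eq_lintegral_ofReal ((hDint r hr).restrict)
            (ae_restrict_of_ae (Filter.Eventually.of_forall fun ω => multiRate_nonneg N _)),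
          ← ofReal_integral_eq_lintegral_ofReal ((hcint r hr).restrict)
            (ae_restrict_of_ae (Filter.Eventually.of_forall fun ω => pairRate_nonneg N _)),
          ← ENNReal.ofReal_mul hε0]
      apply ENNReal.ofReal_le_ofReal
      have hcB0 : 0 ≤ ∫ ω in BSET N ν s t r, pairRate N (fun i => ν r i ω) ∂P :=
        setIntegral_nonneg (hBms r) (fun ω _ => pairRate_nonneg N _)
      calc ∫ ω in BSET N ν s t r, multiRate N (fun i => ν r i ω) ∂P
          ≤ (2*β + 4/(N:ℝ)) * ∫ ω in BSET N ν s t r, pairRate N (fun i => ν r i ω) ∂P :=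
            hsetint r hr
        _ ≤ ε * ∫ ω in BSET N ν s t r, pairRate N (fun i => ν r i ω) ∂P :=
            mul_le_mul_of_nonneg_right (le_abs_self _) hcB0
  -- the cumulated pair rate has lintegral at most t+1
  have hcsum : ∫⁻ ω, ∑' r : ℕ, (BSET N ν s t r).indicator
      (fun ω' => ENNReal.ofReal (pairRate N (fun i => ν r i ω'))) ω ∂P
      ≤ ENNReal.ofReal (t+1) := by
    have hptc : ∀ᵐ ω ∂P, (∑' r : ℕ, (BSET N ν s t r).indicator
        (fun ω' => ENNReal.ofReal (pairRate N (fun i => ν r i ω'))) ω)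
        ≤ ENNReal.ofReal (t+1) := by
      filter_upwards [hEae] with ω hω
      obtain ⟨h1, h2, h3⟩ := hω
      have hmem := hmemω ω h2 h3
      have heq : (∑' r : ℕ, (BSET N ν s t r).indicator
          (fun ω' => ENNReal.ofReal (pairRate N (fun i => ν r i ω'))) ω)
          = ENNReal.ofReal (∑ r ∈ Finset.Icc
              (genInv (fun v => pairRate N (fun i => ν v i ω)) s + 1)
              (genInv (fun v => pairRate N (fun i => ν v i ω)) t),
            pairRate N (fun i => ν r i ω)) := by
        rw [tsum_eq_sum (s := Finset.Icc
            (genInv (fun v => pairRate N (fun i => ν v i ω)) s + 1)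
            (genInv (fun v => pairRate N (fun i => ν v i ω)) t))
          (fun r hr => Set.indicator_of_notMem
            (fun hmem' => hr (Finset.mem_Icc.mpr ((hmem r).mp hmem'))) _)]
        rw [ENNReal.ofReal_sum_of_nonneg (fun r _ => pairRate_nonneg N _)]
        refine Finset.sum_congr rfl fun r hrIcc => ?_
        rw [Set.indicator_of_mem ((hmem r).mpr (Finset.mem_Icc.mp hrIcc))]
      rw [heq]
      apply ENNReal.ofReal_le_ofReal
      exact cumul_le (fun v => pairRate N (fun i => ν v i ω)) s t (le_of_lt htpos)
        (fun v => pairRate_nonneg N _) (fun v hv => pairRate_le_one hN3 _ (h1 v hv)) h3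
    calc ∫⁻ ω, ∑' r : ℕ, (BSET N ν s t r).indicator
          (fun ω' => ENNReal.ofReal (pairRate N (fun i => ν r i ω'))) ω ∂P
        ≤ ∫⁻ _ω, ENNReal.ofReal (t+1) ∂P := lintegral_mono_ae hptc
      _ = ENNReal.ofReal (t+1) := by rw [lintegral_const, measure_univ, mul_one]
  -- assemble everything
  by_cases hint : Integrable (fun ω => ∑ r ∈ Finset.Icc
        (genInv (fun r => pairRate N (fun i => ν r i ω)) s + 1)
        (genInv (fun r => pairRate N (fun i => ν r i ω)) t),
      multiRate N (fun i => ν r i ω)) P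
  · rw [integral_eq_lintegral_of_nonneg_ae
        (Filter.Eventually.of_forall fun ω => Finset.sum_nonneg fun r _ => multiRate_nonneg N _)
        hint.aestronglyMeasurable]
    have hchain : ∫⁻ ω, ENNReal.ofReal (∑ r ∈ Finset.Icc
          (genInv (fun r => pairRate N (fun i => ν r i ω)) s + 1)
          (genInv (fun r => pairRate N (fun i => ν r i ω)) t),
        multiRate N (fun i => ν r i ω)) ∂P
        ≤ ENNReal.ofReal ε * ENNReal.ofReal (t+1) := by
      calc ∫⁻ ω, ENNReal.ofReal (∑ r ∈ Finset.Icc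
            (genInv (fun r => pairRate N (fun i => ν r i ω)) s + 1)
            (genInv (fun r => pairRate N (fun i => ν r i ω)) t),
          multiRate N (fun i => ν r i ω)) ∂P
          = ∫⁻ ω, ∑' r : ℕ, (BSET N ν s t r).indicator
              (fun ω' => ENNReal.ofReal (multiRate N (fun i => ν r i ω'))) ω ∂P :=
            lintegral_congr_ae hkey_pt
        _ = ∑' r : ℕ, ∫⁻ ω, (BSET N ν s t r).indicator
              (fun ω' => ENNReal.ofReal (multiRate N (fun i => ν r i ω'))) ω ∂P :=
            lintegral_tsum (fun r => (hhmD r).aemeasurable)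
        _ ≤ ∑' r : ℕ, (ENNReal.ofReal ε * ∫⁻ ω, (BSET N ν s t r).indicator
              (fun ω' => ENNReal.ofReal (pairRate N (fun i => ν r i ω'))) ω ∂P) :=
            ENNReal.tsum_le_tsum hlint
        _ = ENNReal.ofReal ε * ∑' r : ℕ, ∫⁻ ω, (BSET N ν s t r).indicator
              (fun ω' => ENNReal.ofReal (pairRate N (fun i => ν r i ω'))) ω ∂P :=
            ENNReal.tsum_mul_left
        _ = ENNReal.ofReal ε * ∫⁻ ω, ∑' r : ℕ, (BSET N ν s t r).indicator
              (fun ω' => ENNReal.ofReal (pairRate N (fun i => ν r i ω'))) ω ∂P := by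
            rw [lintegral_tsum (fun r => (hhmc r).aemeasurable)]
        _ ≤ ENNReal.ofReal ε * ENNReal.ofReal (t+1) := mul_le_mul_right hcsum _
    have hfin' := ENNReal.toReal_mono
      (ENNReal.mul_ne_top ENNReal.ofReal_ne_top ENNReal.ofReal_ne_top) hchain
    rw [ENNReal.toReal_mul, ENNReal.toReal_ofReal hε0,
      ENNReal.toReal_ofReal (by linarith : (0:ℝ) ≤ t + 1)] at hfin'
    exact hfin'
  · rw [integral_undef hint]
    exact mul_nonneg hε0 (by linarith)

/-- **Lemma 3 of the paper.** Under the third falling factorial moment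
condition with `b_N → 0` the expected cumulated multiple-merger rate over rescaled time
intervals vanishes as `N → ∞`. -/
theorem expected_cumulative_DN_tendsto_zero
    (Ω : ℕ → Type*) (mΩ : ∀ N, MeasurableSpace (Ω N))
    (P : ∀ N, Measure (Ω N)) (hP : ∀ N, IsProbabilityMeasure (P N))
    (F : ∀ N, Filtration ℕ (mΩ N))
    (ν : ∀ N, ℕ → Fin N → Ω N → ℕ)
    (hadapted : ∀ N t i, Measurable[(F N) t] (ν N t i))
    (hsum : ∀ N : ℕ, 3 ≤ N → ∀ t : ℕ, 1 ≤ t → ∀ᵐ ω ∂(P N), ∑ i, ν N t i ω = N)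
    (hfin : ∀ N : ℕ, 3 ≤ N → ∀ t : ℝ, ∀ᵐ ω ∂(P N),
      {s : ℕ | 1 ≤ s ∧ t ≤ ∑ r ∈ Finset.Icc 1 s,
        pairRate N (fun i => ν N r i ω)}.Nonempty)
    (b : ℕ → ℝ) (hb : Tendsto b atTop (nhds 0))
    (hmom : ∀ N : ℕ, 3 ≤ N → ∀ t : ℕ, 1 ≤ t → ∀ᵐ ω ∂(P N),
      (1 / ((N : ℝ) * (N - 1) * (N - 2))) *
          ∑ i, condExp ((F N) (t - 1)) (P N)
            (fun ω' => (ν N t i ω' : ℝ) * ((ν N t i ω' : ℝ) - 1) *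
              ((ν N t i ω' : ℝ) - 2)) ω ≤
        b N * ((1 / ((N : ℝ) * (N - 1))) *
          ∑ i, condExp ((F N) (t - 1)) (P N)
            (fun ω' => (ν N t i ω' : ℝ) * ((ν N t i ω' : ℝ) - 1)) ω))
    (s t : ℝ) (hs : 0 ≤ s) (hst : s < t) :
    Tendsto (fun N : ℕ =>
        ∫ ω, ∑ r ∈ Finset.Icc
            (genInv (fun r => pairRate N (fun i => ν N r i ω)) s + 1)
            (genInv (fun r => pairRate N (fun i => ν N r i ω)) t),
          multiRate N (fun i => ν N r i ω) ∂(P N))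
      atTop (nhds 0) := by
  apply squeeze_zero' (g := fun N : ℕ => |2 * b N + 4 / (N : ℝ)| * (t + 1))
  · exact Filter.Eventually.of_forall fun N =>
      integral_nonneg fun ω => Finset.sum_nonneg fun r _ => multiRate_nonneg N _
  · rw [eventually_atTop]
    refine ⟨3, fun N hN3 => ?_⟩
    haveI := hP N
    exact main_bound (P N) (F N) N hN3 (ν N) (hadapted N)
      (fun r hr => hsum N hN3 r hr) (fun u => hfin N hN3 u) (b N)
      (fun r hr => hmom N hN3 r hr) s t hs hst
  · have h3 : Tendsto (fun N : ℕ => (4:ℝ) / (N:ℝ)) atTop (nhds 0) :=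
      tendsto_const_div_atTop_nhds_zero_nat 4
    have h1 : Tendsto (fun N : ℕ => 2 * b N + 4 / (N:ℝ)) atTop (nhds 0) := by
      have h := (hb.const_mul (2:ℝ)).add h3
      simpa using h
    have h2 : Tendsto (fun N : ℕ => |2 * b N + 4 / (N:ℝ)|) atTop (nhds 0) := by
      have h := h1.abs
      simpa using h
    have h4 := h2.mul_const (t + 1)
    simpa using h4
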